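/- (Araki–Lieb–Thirring, case r = 1/2) For n×n real symmetric positive semi-definite matrices A and B, tr[(A^{1/2} B A^{1/2})^{1/2}] ≥ tr(A^{1/2} B^{1/2}), with equality if and only if AB = BA. -/

import Mathlib

open Classical in
/-- The positive semi-definite square root of a positive semi-definite real matrix
(junk value `0` if the matrix is not positive semi-definite). -/
noncomputable def psdSqrt {n : ℕ} (M : Matrix (Fin n) (Fin n) ℝ) : Matrix (Fin n) (Fin n) ℝ :=
  if h : M.PosSemidef then
    (h.1.eigenvectorUnitary : Matrix (Fin n) (Fin n) ℝ) *
      Matrix.diagonal ((RCLike.ofReal : ℝ → ℝ) ∘ Real.sqrt ∘ h.1.eigenvalues) *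
      (star h.1.eigenvectorUnitary : Matrix (Fin n) (Fin n) ℝ)
  else 0

open Matrix Polynomial

variable {n : ℕ}

lemma aux_commute_aeval (p : ℝ[X]) {A B : Matrix (Fin n) (Fin n) ℝ} (h : Commute A B) :
    Commute (aeval A p) B := by
  induction p using Polynomial.induction_on' with
  | add p q hp hq => simpa [map_add] using hp.add_left hq
  | monomial k a =>
    rw [aeval_monomial]
    exact (Algebra.commute_algebraMap_left a B).mul_left (h.pow_left k)

lemma aux_aeval_diagonal (p : ℝ[X]) (d : Fin n → ℝ) :
    aeval (diagonal d) p = diagonal (fun i => p.eval (d i)) := by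
  induction p using Polynomial.induction_on' with
  | add p q hp hq => simp [map_add, hp, hq, diagonal_add]
  | monomial k a =>
    rw [aeval_monomial, algebraMap_eq_diagonal, diagonal_pow, diagonal_mul_diagonal]
    funext i
    simp [eval_monomial]

/-- Conjugation by a unitary matrix as an algebra homomorphism. -/
noncomputable def conjAlgHom (U : Matrix.unitaryGroup (Fin n) ℝ) :
    Matrix (Fin n) (Fin n) ℝ →ₐ[ℝ] Matrix (Fin n) (Fin n) ℝ where
  toFun M := (U : Matrix (Fin n) (Fin n) ℝ) * M * star (U : Matrix (Fin n) (Fin n) ℝ)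
  map_one' := by
    show (U : Matrix (Fin n) (Fin n) ℝ) * 1 * star (U : Matrix (Fin n) (Fin n) ℝ) = 1
    rw [mul_one]
    exact Unitary.coe_mul_star_self U
  map_mul' M N := by
    show (U : Matrix (Fin n) (Fin n) ℝ) * (M * N) * star (U : Matrix (Fin n) (Fin n) ℝ) = _
    have h : star (U : Matrix (Fin n) (Fin n) ℝ) * U = 1 := Unitary.coe_star_mul_self U
    have e : ((U : Matrix (Fin n) (Fin n) ℝ) * M * star (U : Matrix (Fin n) (Fin n) ℝ)) *
        ((U : Matrix (Fin n) (Fin n) ℝ) * N * star (U : Matrix (Fin n) (Fin n) ℝ))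
        = (U : Matrix (Fin n) (Fin n) ℝ) * M *
          ((star (U : Matrix (Fin n) (Fin n) ℝ) * U) * (N * star (U : Matrix (Fin n) (Fin n) ℝ))) := by
      noncomm_ring
    rw [e, h, one_mul]
    noncomm_ring
  map_zero' := by
    show (U : Matrix (Fin n) (Fin n) ℝ) * 0 * star (U : Matrix (Fin n) (Fin n) ℝ) = 0
    simp
  map_add' M N := by
    show (U : Matrix (Fin n) (Fin n) ℝ) * (M + N) * star (U : Matrix (Fin n) (Fin n) ℝ) = _
    simp [Matrix.mul_add, Matrix.add_mul]
  commutes' r := by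
    show (U : Matrix (Fin n) (Fin n) ℝ) * _ * star (U : Matrix (Fin n) (Fin n) ℝ) = _
    rw [Algebra.algebraMap_eq_smul_one]
    rw [Matrix.mul_smul, mul_one, Matrix.smul_mul, ← Unitary.coe_star, Unitary.coe_mul_star_self U]

lemma aux_aeval_conj (U : Matrix.unitaryGroup (Fin n) ℝ) (D : Matrix (Fin n) (Fin n) ℝ) (p : ℝ[X]) :
    aeval ((U : Matrix (Fin n) (Fin n) ℝ) * D * star (U : Matrix (Fin n) (Fin n) ℝ)) p
      = U * aeval D p * star (U : Matrix (Fin n) (Fin n) ℝ) :=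
  Polynomial.aeval_algHom_apply (conjAlgHom U) D p

noncomputable def Matrix.PosSemidef.sqrt {A : Matrix (Fin n) (Fin n) ℝ} (hA : A.PosSemidef) :
    Matrix (Fin n) (Fin n) ℝ :=
  (hA.1.eigenvectorUnitary : Matrix (Fin n) (Fin n) ℝ) *
    Matrix.diagonal ((RCLike.ofReal : ℝ → ℝ) ∘ Real.sqrt ∘ hA.1.eigenvalues) *
    (star hA.1.eigenvectorUnitary : Matrix (Fin n) (Fin n) ℝ)

section
open scoped MatrixOrder

lemma Matrix.PosSemidef.sqrt_eq_csqrt {A : Matrix (Fin n) (Fin n) ℝ} (hA : A.PosSemidef) :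
    hA.sqrt = CFC.sqrt A := by
  rw [CFC.sqrt_eq_real_sqrt A (nonneg_iff_posSemidef.mpr hA), cfcₙ_eq_cfc, hA.1.cfc_eq, IsHermitian.cfc,
    Unitary.conjStarAlgAut_apply]
  rfl

lemma Matrix.PosSemidef.posSemidef_sqrt {A : Matrix (Fin n) (Fin n) ℝ} (hA : A.PosSemidef) :
    hA.sqrt.PosSemidef := by
  rw [hA.sqrt_eq_csqrt]
  exact nonneg_iff_posSemidef.mp (CFC.sqrt_nonneg A)

lemma Matrix.PosSemidef.sqrt_mul_self {A : Matrix (Fin n) (Fin n) ℝ} (hA : A.PosSemidef) :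
    hA.sqrt * hA.sqrt = A := by
  rw [hA.sqrt_eq_csqrt]
  exact CFC.sqrt_mul_sqrt_self A (nonneg_iff_posSemidef.mpr hA)

lemma Matrix.PosSemidef.eq_sqrt_of_sq_eq {A : Matrix (Fin n) (Fin n) ℝ} (hA : A.PosSemidef)
    {B : Matrix (Fin n) (Fin n) ℝ} (hB : B.PosSemidef) (h : A ^ 2 = B) : A = hB.sqrt := by
  rw [hB.sqrt_eq_csqrt, ← h, CFC.sqrt_sq A (nonneg_iff_posSemidef.mpr hA)]

end

/-- The psd square root is a polynomial in the matrix. -/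
lemma aux_sqrt_eq_aeval {A : Matrix (Fin n) (Fin n) ℝ} (hA : A.PosSemidef) :
    ∃ p : ℝ[X], aeval A p = hA.sqrt := by
  classical
  set ev := hA.1.eigenvalues with hev
  set s : Finset ℝ := Finset.univ.image ev with hs
  refine ⟨Lagrange.interpolate s id Real.sqrt, ?_⟩
  have hinj : Set.InjOn (id : ℝ → ℝ) s := Function.injective_id.injOn
  have hnode : ∀ i, Polynomial.eval (ev i) (Lagrange.interpolate s id Real.sqrt) = Real.sqrt (ev i) := by
    intro i
    have hmem : ev i ∈ s := Finset.mem_image_of_mem ev (Finset.mem_univ i)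
    simpa using Lagrange.eval_interpolate_at_node Real.sqrt hinj hmem
  have hst := hA.1.spectral_theorem
  rw [Matrix.PosSemidef.sqrt]
  conv_lhs => rw [hst, Unitary.conjStarAlgAut_apply]
  rw [aux_aeval_conj, aux_aeval_diagonal]
  have hd : (fun i => Polynomial.eval ((RCLike.ofReal ∘ ev) i) (Lagrange.interpolate s id Real.sqrt))
      = (RCLike.ofReal ∘ Real.sqrt ∘ ev) := by
    funext i
    simp only [Function.comp_apply, RCLike.ofReal_real_eq_id, id_eq]
    exact hnode i
  rw [hd]

lemma aux_commute_sqrt {A B : Matrix (Fin n) (Fin n) ℝ} (hA : A.PosSemidef)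
    (h : Commute A B) : Commute hA.sqrt B := by
  obtain ⟨p, hp⟩ := aux_sqrt_eq_aeval hA
  rw [← hp]
  exact aux_commute_aeval p h

variable {n : ℕ}

lemma aux_trace_sqrt (M : Matrix (Fin n) (Fin n) ℝ) :
    M.trace ≤ (posSemidef_conjTranspose_mul_self M).sqrt.trace ∧
      ((posSemidef_conjTranspose_mul_self M).sqrt.trace = M.trace ↔ M.PosSemidef) := by
  classical
  have hK : (Mᴴ * M).PosSemidef := posSemidef_conjTranspose_mul_self M
  set S := hK.sqrt with hSdef
  have hS : S.PosSemidef := hK.posSemidef_sqrt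
  have hSS : S * S = Mᴴ * M := hK.sqrt_mul_self
  have hH : S.IsHermitian := hS.1
  set σ : Fin n → ℝ := hH.eigenvalues with hσdef
  have hσ0 : ∀ i, 0 ≤ σ i := hS.eigenvalues_nonneg
  set a : Fin n → (Fin n → ℝ) := fun i => (WithLp.equiv 2 (Fin n → ℝ)) (hH.eigenvectorBasis i)
    with hadef
  have heig : ∀ i, S *ᵥ a i = σ i • a i := hH.mulVec_eigenvectorBasis
  have hnorm1 : ∀ i, ‖hH.eigenvectorBasis i‖ = 1 := fun i => hH.eigenvectorBasis.orthonormal.1 i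
  have haa : ∀ i, a i ⬝ᵥ a i = 1 := by
    intro i
    have h2 := real_inner_self_eq_norm_sq (hH.eigenvectorBasis i)
    rw [EuclideanSpace.inner_eq_star_dotProduct] at h2
    simp only [star_trivial] at h2
    rw [hadef]
    exact h2.trans (by rw [hnorm1 i, one_pow])
  have hMH : Mᴴ = Mᵀ := by
    ext i j
    simp [conjTranspose_apply]
  -- ‖M *ᵥ a i‖² = σ i ^ 2
  have hdot : ∀ i, (M *ᵥ a i) ⬝ᵥ (M *ᵥ a i) = σ i ^ 2 := by
    intro i
    have h1 : (M *ᵥ a i) ⬝ᵥ (M *ᵥ a i) = a i ⬝ᵥ ((Mᴴ * M) *ᵥ a i) := by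
      rw [hMH, ← mulVec_mulVec]
      conv_rhs => rw [dotProduct_mulVec, vecMul_transpose]
    rw [h1, ← hSS, ← mulVec_mulVec, heig i, mulVec_smul, heig i, smul_smul]
    rw [dotProduct_smul, haa i]
    simp [pow_two]
  -- the diagonal entries
  set c : Fin n → ℝ := fun i => a i ⬝ᵥ (M *ᵥ a i) with hcdef
  have key : ∀ i, c i ≤ σ i ∧ (c i = σ i → M *ᵥ a i = σ i • a i) := by
    intro i
    set x : EuclideanSpace ℝ (Fin n) := hH.eigenvectorBasis i with hxdef
    set y : EuclideanSpace ℝ (Fin n) := (WithLp.equiv 2 (Fin n → ℝ)).symm (M *ᵥ a i) with hydef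
    have hyv : (WithLp.equiv 2 (Fin n → ℝ)) y = M *ᵥ a i := by
      rw [hydef, Equiv.apply_symm_apply]
    have hxy : inner ℝ x y = c i := by
      rw [EuclideanSpace.inner_eq_star_dotProduct, show y.ofLp = M *ᵥ a i from hyv]
      simp only [star_trivial]
      exact dotProduct_comm _ _
    have hyy : ‖y‖ = σ i := by
      have h2 := real_inner_self_eq_norm_sq y
      rw [EuclideanSpace.inner_eq_star_dotProduct, show y.ofLp = M *ᵥ a i from hyv] at h2
      simp only [star_trivial] at h2
      rw [hdot i] at h2
      rw [← Real.sqrt_sq (norm_nonneg y), ← h2, Real.sqrt_sq (hσ0 i)]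
    constructor
    · calc c i = inner ℝ x y := hxy.symm
        _ ≤ ‖x‖ * ‖y‖ := real_inner_le_norm x y
        _ = σ i := by rw [hnorm1 i, hyy, one_mul]
    · intro hc
      have : (inner ℝ x y : ℝ) = ‖x‖ * ‖y‖ := by
        rw [hxy, hc, hnorm1 i, hyy, one_mul]
      rw [inner_eq_norm_mul_iff_real, hyy, hnorm1 i, one_smul] at this
      -- this : σ i • x = y
      have := congrArg (WithLp.equiv 2 (Fin n → ℝ)) this
      rw [hyv] at this
      rw [← this]
      rfl
  -- trace M = ∑ c i
  set U : Matrix (Fin n) (Fin n) ℝ := (hH.eigenvectorUnitary : Matrix (Fin n) (Fin n) ℝ) with hUdef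
  have hUU : U * star U = 1 := Unitary.coe_mul_star_self _
  have hUU' : star U * U = 1 := Unitary.coe_star_mul_self _
  have htrM : M.trace = ∑ i, c i := by
    have h1 : M.trace = (star U * M * U).trace := by
      rw [trace_mul_cycle, hUU, one_mul]
    rw [h1, Matrix.trace]
    refine Finset.sum_congr rfl fun i _ => ?_
    show (star U * M * U) i i = a i ⬝ᵥ (M *ᵥ a i)
    rw [mul_assoc, Matrix.mul_apply]
    simp only [Matrix.star_apply, star_trivial, Matrix.mul_apply]
    refine Finset.sum_congr rfl fun j _ => ?_
    rfl
  -- trace S = ∑ σ i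
  have htrS : S.trace = ∑ i, σ i := by
    conv_lhs => rw [hH.spectral_theorem, Unitary.conjStarAlgAut_apply]
    rw [trace_mul_cycle, ← hUdef, hUU', one_mul, trace_diagonal]
    simp [RCLike.ofReal_real_eq_id, hσdef]
  have hle : M.trace ≤ S.trace := by
    rw [htrM, htrS]
    exact Finset.sum_le_sum fun i _ => (key i).1
  refine ⟨hle, ?_, ?_⟩
  · intro heq
    -- all c i = σ i
    have hall : ∀ i ∈ Finset.univ, σ i - c i = 0 := by
      rw [← Finset.sum_eq_zero_iff_of_nonneg (fun i _ => sub_nonneg.2 (key i).1)]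
      rw [Finset.sum_sub_distrib, ← htrS, ← htrM, heq, sub_self]
    have hMS : M = S := by
      apply Matrix.toEuclideanLin.injective
      apply Module.Basis.ext hH.eigenvectorBasis.toBasis
      intro i
      rw [OrthonormalBasis.coe_toBasis, toEuclideanLin_apply, toEuclideanLin_apply]
      have hci : c i = σ i := by
        have := hall i (Finset.mem_univ i)
        linarith
      have h2 := (key i).2 hci
      congr 1
      show M *ᵥ a i = S *ᵥ a i
      rw [h2, heig i]
    rw [hMS]
    exact hS
  · intro hP
    have hM2 : M ^ 2 = Mᴴ * M := by
      rw [pow_two, hP.1]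
    have : M = hK.sqrt := hP.eq_sqrt_of_sq_eq hK hM2
    exact congrArg Matrix.trace (hSdef.trans this.symm)

/-- Araki–Lieb–Thirring, case `r = 1/2`: for positive semi-definite `A, B`,
`tr[(A^{1/2} B A^{1/2})^{1/2}] ≥ tr(A^{1/2} B^{1/2})`, with equality iff `A B = B A`. -/
theorem stmt5 {n : ℕ} (A B : Matrix (Fin n) (Fin n) ℝ)
    (hA : A.PosSemidef) (hB : B.PosSemidef) :
    (psdSqrt A * psdSqrt B).trace ≤ (psdSqrt (psdSqrt A * B * psdSqrt A)).trace ∧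
      ((psdSqrt (psdSqrt A * B * psdSqrt A)).trace = (psdSqrt A * psdSqrt B).trace
        ↔ A * B = B * A) := by
  classical
  have hXd : psdSqrt A = hA.sqrt := dif_pos hA
  have hYd : psdSqrt B = hB.sqrt := dif_pos hB
  rw [hXd, hYd]
  set X := hA.sqrt with hXdef
  set Y := hB.sqrt with hYdef
  have hX : X.PosSemidef := hA.posSemidef_sqrt
  have hY : Y.PosSemidef := hB.posSemidef_sqrt
  set M := Y * X with hMdef
  have hMM : Mᴴ * M = X * B * X := by
    rw [hMdef, conjTranspose_mul, hX.1, hY.1]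
    have h1 : X * Y * (Y * X) = X * (Y * Y) * X := by noncomm_ring
    rw [h1, hB.sqrt_mul_self]
  rw [← hMM]
  have hpsd := posSemidef_conjTranspose_mul_self M
  have hps : psdSqrt (Mᴴ * M) = hpsd.sqrt := dif_pos hpsd
  rw [hps]
  obtain ⟨hle, hiff⟩ := aux_trace_sqrt M
  have htr : (X * Y).trace = M.trace := trace_mul_comm X Y
  constructor
  · rw [htr]
    exact hle
  · rw [htr, hiff]
    constructor
    · intro hP
      have hc : Commute X Y := by
        have h : (Y * X)ᴴ = Y * X := hP.1
        rw [conjTranspose_mul, hX.1, hY.1] at h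
        exact h
      rw [← hA.sqrt_mul_self, ← hB.sqrt_mul_self, ← hXdef, ← hYdef]
      exact ((hc.mul_left hc).mul_right (hc.mul_left hc)).eq
    · intro hAB
      have c1 : Commute A B := hAB
      have c2 : Commute X B := by
        rw [hXdef]
        exact aux_commute_sqrt hA c1
      have c3 : Commute Y X := by
        rw [hYdef]
        exact aux_commute_sqrt hB c2.symm
      set W := hX.sqrt with hWdef
      have c4 : Commute W Y := by
        rw [hWdef]
        exact aux_commute_sqrt hX c3.symm
      have hMW : M = Wᴴ * Y * W := by
        have hWW : W * W = X := hX.sqrt_mul_self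
        have hWH : Wᴴ = W := hX.posSemidef_sqrt.1
        rw [hMdef, hWH, ← hWW, ← mul_assoc, ← c4.eq]
      rw [hMW]
      exact hY.conjTranspose_mul_mul_same W
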